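/- For all n, m ≥ 0, the sum of the total groves of degrees n and m is the total grove of degree n+m; that is, ⋃_{x ∈ Y_n, y ∈ Y_m} { z ∈ Y_{n+m} : x/y ≤ z ≤ x\y } = Y_{n+m}. -/

import Mathlib

/-- A planar binary tree: a leaf `|` or a grafting `x ∨ y`. -/
inductive PBT : Type
  | leaf : PBT
  | node : PBT → PBT → PBT
  deriving DecidableEq

namespace PBT

/-- The degree: number of internal vertices. -/
def deg : PBT → ℕ
  | leaf => 0
  | node l r => deg l + deg r + 1

/-- The set `Y n` of planar binary trees of degree `n`. -/
def Y (n : ℕ) : Set PBT := {t | t.deg = n}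

/-- The `over` operation `x / y`. -/
def overT : PBT → PBT → PBT
  | x, leaf => x
  | x, node yl yr => node (overT x yl) yr

/-- The `under` operation `x \ y`. -/
def under : PBT → PBT → PBT
  | leaf, y => y
  | node xl xr, y => node xl (under xr y)

/-- The Tamari order, generated by `(x ∨ y) ∨ z ≤ x ∨ (y ∨ z)` and compatibility
with grafting on both sides. -/
inductive tle : PBT → PBT → Prop
  | refl (x : PBT) : tle x x
  | trans {x y z : PBT} : tle x y → tle y z → tle x z
  | rotate (x y z : PBT) : tle (node (node x y) z) (node x (node y z))
  | node_left {x y : PBT} (z : PBT) : tle x y → tle (node x z) (node y z)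
  | node_right {x y : PBT} (z : PBT) : tle x y → tle (node z x) (node z y)

/-- The sum of two planar binary trees: the Tamari interval `[x/y, x\y]`
(a subset of `Y (deg x + deg y)`). -/
def sum (x y : PBT) : Set PBT := {z | tle (overT x y) z ∧ tle z (under x y)}

/-- A grove of degree `n`: a nonempty subset of `Y n`. -/
def Grove (n : ℕ) (A : Set PBT) : Prop := A.Nonempty ∧ ∀ x ∈ A, x.deg = n

/-- The sum of groves. -/
def gsum (A B : Set PBT) : Set PBT := ⋃ x ∈ A, ⋃ y ∈ B, sum x y

/-- The reflection involution σ. -/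
def σ : PBT → PBT
  | leaf => leaf
  | node l r => node (σ r) (σ l)

/-- The left sum `x ⊣ y` of trees (with the conventions `x ⊣ | = {x}`, `| ⊣ y = {|}`). -/
def lsum : PBT → PBT → Set PBT
  | x, leaf => {x}
  | leaf, _ => {leaf}
  | node xl xr, y => (fun z => node xl z) '' sum xr y

/-- The right sum `x ⊢ y` of trees (with the conventions `| ⊢ y = {y}`, `x ⊢ | = {|}`). -/
def rsum : PBT → PBT → Set PBT
  | leaf, y => {y}
  | _, leaf => {leaf}
  | x, node yl yr => (fun z => node z yr) '' sum x yl

/-- Left sum of groves. -/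
def glsum (A B : Set PBT) : Set PBT := ⋃ x ∈ A, ⋃ y ∈ B, lsum x y

/-- Right sum of groves. -/
def grsum (A B : Set PBT) : Set PBT := ⋃ x ∈ A, ⋃ y ∈ B, rsum x y

/-- Multiplication of a tree by a grove:
`| × B = {|}` and `(xˡ ∨ xʳ) × B = ((xˡ × B) ⊢ B) ⊣ (xʳ × B)`.
(The conventions `{|} ⊢ B = B` and `A ⊣ {|} = A` are built into `rsum`/`lsum`.) -/
def tmul : PBT → Set PBT → Set PBT
  | leaf, _ => {leaf}
  | node l r, B => glsum (grsum (tmul l B) B) (tmul r B)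

/-- Multiplication of groves. -/
def gmul (A B : Set PBT) : Set PBT := ⋃ x ∈ A, tmul x B

end PBT


namespace PBT

theorem tle_deg {a b : PBT} (h : tle a b) : deg a = deg b := by
  induction h with
  | refl => rfl
  | trans _ _ ih1 ih2 => omega
  | rotate x y z => simp [deg]; omega
  | node_left z _ ih => simp [deg]; omega
  | node_right z _ ih => simp [deg]; omega

theorem over_deg (x y : PBT) : deg (overT x y) = deg x + deg y := by
  induction y with
  | leaf => simp [overT, deg]
  | node yl yr ih1 ih2 => simp [overT, deg, ih1]; omega

/-- split a tree at leaf `i`. -/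
def split : PBT → ℕ → PBT × PBT
  | leaf, _ => (leaf, leaf)
  | node l r, i =>
    if i ≤ deg l then ((split l i).1, node (split l i).2 r)
    else (node l (split r (i - deg l - 1)).1, (split r (i - deg l - 1)).2)

theorem split_deg_add (z : PBT) (i : ℕ) :
    deg (split z i).1 + deg (split z i).2 = deg z := by
  induction z generalizing i with
  | leaf => simp [split, deg]
  | node l r ihl ihr =>
    by_cases h : i ≤ deg l <;> simp [split, h, deg]
    · have := ihl i; omega
    · have := ihr (i - deg l - 1); omega

theorem split_deg_fst (z : PBT) (i : ℕ) (h : i ≤ deg z) :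
    deg (split z i).1 = i := by
  induction z generalizing i with
  | leaf => simp [deg] at h; simp [split, deg, h]
  | node l r ihl ihr =>
    by_cases h2 : i ≤ deg l <;> simp [split, h2, deg]
    · exact ihl i h2
    · have : i - deg l - 1 ≤ deg r := by simp [deg] at h; omega
      have := ihr (i - deg l - 1) this; omega

theorem under_node (a b c : PBT) : tle (node (under a b) c) (under a (node b c)) := by
  induction a generalizing b with
  | leaf => simp [under]; exact tle.refl _
  | node al ar ih1 ih2 =>
    simp only [under]
    exact tle.trans (tle.rotate al (under ar b) c) (tle.node_right al (ih2 b))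

theorem over_node (a b c : PBT) : tle (overT (node a b) c) (node a (overT b c)) := by
  induction c with
  | leaf => simp [overT]; exact tle.refl _
  | node cl cr ih1 ih2 =>
    simp only [overT]
    exact tle.trans (tle.node_left cr ih1) (tle.rotate a (overT b cl) cr)

theorem split_le (z : PBT) (i : ℕ) :
    tle (overT (split z i).1 (split z i).2) z ∧ tle z (under (split z i).1 (split z i).2) := by
  induction z generalizing i with
  | leaf => exact ⟨tle.refl _, tle.refl _⟩
  | node l r ihl ihr =>
    by_cases h : i ≤ deg l <;> simp only [split] <;> [rw [if_pos h]; rw [if_neg h]]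
    · obtain ⟨h1, h2⟩ := ihl i
      constructor
      · simp only [overT]
        exact tle.node_left r h1
      · exact tle.trans (tle.node_left r h2) (under_node _ _ r)
    · obtain ⟨h1, h2⟩ := ihr (i - deg l - 1)
      constructor
      · exact tle.trans (over_node l _ _) (tle.node_right l h1)
      · simp only [under]
        exact tle.node_right l h2

end PBT

open PBT in
/-- `⋃_{x ∈ Y_n, y ∈ Y_m} (x + y) = Y_{n+m}`. -/
theorem total_grove_add (n m : ℕ) :
    (⋃ x ∈ Y n, ⋃ y ∈ Y m, PBT.sum x y) = Y (n + m) := by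
  ext z
  simp only [Set.mem_iUnion, PBT.sum, Set.mem_setOf_eq, Y]
  constructor
  · rintro ⟨x, hx, y, hy, h1, h2⟩
    have := tle_deg h1
    have := over_deg x y
    omega
  · intro hz
    refine ⟨(split z n).1, ?_, (split z n).2, ?_, (split_le z n).1, (split_le z n).2⟩
    · exact split_deg_fst z n (by omega)
    · have h1 := split_deg_add z n
      have h2 := split_deg_fst z n (by omega)
      show deg _ = m
      omega
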